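/- The subgroup of a group G generated by two nilpotent normal subgroups N and M of G is again a nilpotent normal subgroup of G (Fitting's theorem for two subgroups). -/

import Mathlib

open Subgroup
open scoped commutatorElement

namespace FittingAux

variable {G : Type*} [Group G]

/-- A supremum of normal subgroups is normal. -/
lemma normal_iSup {ι : Sort*} (H : ι → Subgroup G) (h : ∀ i, (H i).Normal) :
    (⨆ i, H i).Normal := by
  constructor
  intro n hn g
  refine Subgroup.iSup_induction H (C := fun x => g * x * g⁻¹ ∈ ⨆ i, H i) hn ?_ ?_ ?_
  · intro i x hx
    exact le_iSup H i ((h i).conj_mem x hx g)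
  · simpa using one_mem (⨆ i, H i)
  · intro x y hx hy
    have hxy : g * (x * y) * g⁻¹ = (g * x * g⁻¹) * (g * y * g⁻¹) := by group
    rw [hxy]
    exact mul_mem hx hy

/-- Commutator distributes (as an inequality) over a supremum of normal subgroups. -/
lemma commutator_iSup_left_le {ι : Sort*} (H : ι → Subgroup G) (K : Subgroup G)
    (hH : ∀ i, (H i).Normal) (hK : K.Normal) :
    ⁅⨆ i, H i, K⁆ ≤ ⨆ i, ⁅H i, K⁆ := by
  have hRn : (⨆ i, ⁅H i, K⁆).Normal := by
    refine normal_iSup _ fun i => ?_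
    haveI := hH i; haveI := hK
    infer_instance
  set R := ⨆ i, ⁅H i, K⁆ with hR
  let S : Subgroup G :=
    { carrier := {g | ∀ k ∈ K, ⁅g, k⁆ ∈ R}
      one_mem' := by
        intro k hk
        simpa using one_mem R
      mul_mem' := by
        intro a b ha hb k hk
        have key : ⁅a * b, k⁆ = a * ⁅b, k⁆ * a⁻¹ * ⁅a, k⁆ := by
          simp only [commutatorElement_def]; group
        rw [key]
        exact mul_mem (hRn.conj_mem _ (hb k hk) a) (ha k hk)
      inv_mem' := by
        intro a ha k hk
        have key : ⁅a⁻¹, k⁆ = a⁻¹ * ⁅a, k⁆⁻¹ * a := by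
          simp only [commutatorElement_def]; group
        rw [key]
        simpa using hRn.conj_mem _ (inv_mem (ha k hk)) a⁻¹
      }
  have hle : (⨆ i, H i) ≤ S := by
    refine iSup_le fun i g hg k hk => ?_
    exact le_iSup (fun i => ⁅H i, K⁆) i (commutator_mem_commutator hg hk)
  rw [commutator_le]
  intro g hg k hk
  exact hle hg k hk

lemma normal_inf' {H K : Subgroup G} (hH : H.Normal) (hK : K.Normal) : (H ⊓ K).Normal :=
  ⟨fun n hn g => ⟨hH.conj_mem n hn.1 g, hK.conj_mem n hn.2 g⟩⟩

/-- ⁅X, N ⊔ M⁆ ≤ ⁅X, N⁆ ⊔ ⁅X, M⁆ for normal subgroups. -/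
lemma commutator_sup_right_le (X N M : Subgroup G) (hX : X.Normal) (hN : N.Normal)
    (hM : M.Normal) : ⁅X, N ⊔ M⁆ ≤ ⁅X, N⁆ ⊔ ⁅X, M⁆ := by
  have h := commutator_iSup_left_le (fun b : Bool => bif b then N else M) X
    (by rintro (_ | _) <;> assumption) hX
  simp only [iSup_bool_eq, cond_true, cond_false] at h
  calc ⁅X, N ⊔ M⁆ = ⁅N ⊔ M, X⁆ := Subgroup.commutator_comm _ _
    _ ≤ ⁅N, X⁆ ⊔ ⁅M, X⁆ := h
    _ = ⁅X, N⁆ ⊔ ⁅X, M⁆ := by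
        rw [Subgroup.commutator_comm N X, Subgroup.commutator_comm M X]

/-- The iterated commutator series of a subgroup, taken inside the ambient group. -/
def lcsIn (N : Subgroup G) : ℕ → Subgroup G
  | 0 => N
  | n + 1 => ⁅lcsIn N n, N⁆

lemma lcsIn_normal (N : Subgroup G) (hN : N.Normal) : ∀ n, (lcsIn N n).Normal
  | 0 => hN
  | n + 1 => by
    haveI := lcsIn_normal N hN n; haveI := hN
    exact Subgroup.commutator_normal _ _

lemma lcsIn_antitone (N : Subgroup G) (hN : N.Normal) : Antitone (lcsIn N) := by
  refine antitone_nat_of_succ_le fun n => ?_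
  haveI := lcsIn_normal N hN n
  exact Subgroup.commutator_le_left _ _

lemma lcsIn_eq_map (N : Subgroup G) (n : ℕ) :
    ((⊤ : Subgroup ↥N).lowerCentralSeries n).map N.subtype = lcsIn N n := by
  induction n with
  | zero =>
    show Subgroup.map N.subtype ⊤ = N
    rw [← MonoidHom.range_eq_map, N.range_subtype]
  | succ n ih =>
    show Subgroup.map N.subtype ⁅(⊤ : Subgroup ↥N).lowerCentralSeries n, ⊤⁆ = ⁅lcsIn N n, N⁆
    rw [Subgroup.map_commutator, ih, ← MonoidHom.range_eq_map, N.range_subtype]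

lemma isNilpotent_iff_lcsIn (N : Subgroup G) :
    Group.IsNilpotent ↥N ↔ ∃ n, lcsIn N n = ⊥ := by
  rw [Subgroup.nilpotent_iff_lowerCentralSeries]
  constructor
  · rintro ⟨n, hn⟩
    exact ⟨n, by rw [← lcsIn_eq_map, hn, Subgroup.map_bot]⟩
  · rintro ⟨n, hn⟩
    refine ⟨n, ?_⟩
    have h := lcsIn_eq_map N n
    rw [hn, Subgroup.map_eq_bot_iff, Subgroup.ker_subtype, le_bot_iff] at h
    exact h

/-- Auxiliary series: `dSer N 0 = ⊤`, `dSer N (i+1) = lcsIn N i`. -/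
def dSer (N : Subgroup G) : ℕ → Subgroup G
  | 0 => ⊤
  | i + 1 => lcsIn N i

lemma dSer_normal (N : Subgroup G) (hN : N.Normal) : ∀ i, (dSer N i).Normal
  | 0 => show (⊤ : Subgroup G).Normal from inferInstance
  | i + 1 => lcsIn_normal N hN i

lemma commutator_dSer_le (N M : Subgroup G) (hN : N.Normal) (hM : M.Normal) (i j : ℕ) :
    ⁅dSer N i ⊓ dSer M j, N⁆ ≤ dSer N (i + 1) ⊓ dSer M j := by
  refine le_inf ?_ ?_
  · cases i with
    | zero =>
      haveI := hN
      exact Subgroup.commutator_le_right _ _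
    | succ s =>
      exact Subgroup.commutator_mono inf_le_left le_rfl
  · haveI := dSer_normal M hM j
    exact (Subgroup.commutator_mono inf_le_right le_rfl).trans
      (Subgroup.commutator_le_left _ _)

lemma commutator_dSer_le' (N M : Subgroup G) (hN : N.Normal) (hM : M.Normal) (i j : ℕ) :
    ⁅dSer N i ⊓ dSer M j, M⁆ ≤ dSer N i ⊓ dSer M (j + 1) := by
  have h := commutator_dSer_le M N hM hN j i
  calc ⁅dSer N i ⊓ dSer M j, M⁆ = ⁅dSer M j ⊓ dSer N i, M⁆ := by rw [inf_comm]
    _ ≤ dSer M (j + 1) ⊓ dSer N i := h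
    _ = dSer N i ⊓ dSer M (j + 1) := inf_comm _ _

/-- The key estimate for Fitting's theorem. -/
lemma fitting_key (N M : Subgroup G) (hN : N.Normal) (hM : M.Normal) : ∀ n : ℕ,
    lcsIn (N ⊔ M) n ≤ ⨆ p : {i : ℕ // i ≤ n + 1}, dSer N p.1 ⊓ dSer M (n + 1 - p.1) := by
  intro n
  induction n with
  | zero =>
    show N ⊔ M ≤ _
    refine sup_le ?_ ?_
    · refine le_iSup_of_le ⟨1, by omega⟩ ?_
      show N ≤ dSer N 1 ⊓ dSer M 0
      simp [dSer, lcsIn]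
    · refine le_iSup_of_le ⟨0, by omega⟩ ?_
      show M ≤ dSer N 0 ⊓ dSer M 1
      simp [dSer, lcsIn]
  | succ n ih =>
    have hfn : ∀ p : {i : ℕ // i ≤ n + 1}, (dSer N p.1 ⊓ dSer M (n + 1 - p.1)).Normal :=
      fun p => normal_inf' (dSer_normal N hN _) (dSer_normal M hM _)
    have hXn : (⨆ p : {i : ℕ // i ≤ n + 1}, dSer N p.1 ⊓ dSer M (n + 1 - p.1)).Normal :=
      normal_iSup _ hfn
    calc lcsIn (N ⊔ M) (n + 1)
        = ⁅lcsIn (N ⊔ M) n, N ⊔ M⁆ := rfl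
      _ ≤ ⁅⨆ p : {i : ℕ // i ≤ n + 1}, dSer N p.1 ⊓ dSer M (n + 1 - p.1), N ⊔ M⁆ :=
          Subgroup.commutator_mono ih le_rfl
      _ ≤ ⁅⨆ p : {i : ℕ // i ≤ n + 1}, dSer N p.1 ⊓ dSer M (n + 1 - p.1), N⁆ ⊔
          ⁅⨆ p : {i : ℕ // i ≤ n + 1}, dSer N p.1 ⊓ dSer M (n + 1 - p.1), M⁆ :=
          commutator_sup_right_le _ _ _ hXn hN hM
      _ ≤ _ := by
          refine sup_le ?_ ?_
          · refine (commutator_iSup_left_le _ N hfn hN).trans (iSup_le fun p => ?_)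
            refine (commutator_dSer_le N M hN hM _ _).trans ?_
            refine le_iSup_of_le ⟨p.1 + 1, by omega⟩ ?_
            have : n + 1 + 1 - (p.1 + 1) = n + 1 - p.1 := by omega
            rw [this]
          · refine (commutator_iSup_left_le _ M hfn hM).trans (iSup_le fun p => ?_)
            refine (commutator_dSer_le' N M hN hM _ _).trans ?_
            refine le_iSup_of_le ⟨p.1, by omega⟩ ?_
            have : n + 1 + 1 - p.1 = n + 1 - p.1 + 1 := by omega
            rw [this]

end FittingAux

/-- Fitting's theorem for two subgroups: the subgroup generated by two nilpotent
normal subgroups of a group `G` is again a nilpotent normal subgroup of `G`. -/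
theorem fitting_sup_of_two
    {G : Type*} [Group G] (N M : Subgroup G) (hN : N.Normal) (hM : M.Normal)
    (hNnil : Group.IsNilpotent N) (hMnil : Group.IsNilpotent M) :
    Group.IsNilpotent ↥(N ⊔ M) ∧ (N ⊔ M).Normal := by
  haveI := hN; haveI := hM
  refine ⟨?_, Subgroup.sup_normal N M⟩
  obtain ⟨a, ha⟩ := (FittingAux.isNilpotent_iff_lcsIn N).mp hNnil
  obtain ⟨b, hb⟩ := (FittingAux.isNilpotent_iff_lcsIn M).mp hMnil
  refine (FittingAux.isNilpotent_iff_lcsIn _).mpr ⟨a + b + 1, ?_⟩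
  rw [eq_bot_iff]
  refine (FittingAux.fitting_key N M hN hM (a + b + 1)).trans (iSup_le ?_)
  rintro ⟨i, hi⟩
  by_cases h : a + 1 ≤ i
  · obtain ⟨s, rfl⟩ : ∃ s, i = s + 1 := ⟨i - 1, by omega⟩
    refine inf_le_left.trans ?_
    show FittingAux.lcsIn N s ≤ ⊥
    exact (FittingAux.lcsIn_antitone N hN (show a ≤ s by omega)).trans_eq ha
  · refine inf_le_right.trans ?_
    obtain ⟨t, ht1, ht2⟩ : ∃ t, a + b + 1 + 1 - i = t + 1 ∧ b ≤ t :=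
      ⟨a + b + 1 - i, by omega, by omega⟩
    rw [ht1]
    show FittingAux.lcsIn M t ≤ ⊥
    exact (FittingAux.lcsIn_antitone M hM ht2).trans_eq hb
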